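/- Let S > 0, ρ ≠ 0, ε > 0, M ≥ 0 be real numbers, and let H, R, T, A₁, A₂, A₃ ∈ ℝ satisfy |A_k − S·(ρH + kεR + k²ε²T)| ≤ M·ε³ for k = 1, 2, 3. Define Δ₁ := A₂ − A₁, Δ₂ := A₃ − A₂, Θ̂ := (Δ₂ − Δ₁)/(2Sε²), R̂ := Δ₁/(Sε) − 3εΘ̂, and Ĥ := ρ^{−1}·(A₁/S − εR̂ − ε²Θ̂). Then |Θ̂ − T| ≤ 2(M/S)·ε, |R̂ − R| ≤ 8(M/S)·ε², and |Ĥ − H| ≤ 11·(M/(S·|ρ|))·ε³. -/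
import Mathlib


set_option maxHeartbeats 1600000 in
/-- Algebraic core of the three-scale, projection-free de-biasing estimators: from
measurements `A_k` with `|A_k − S·(ρH + kεR + k²ε²T)| ≤ M·ε³` (`k = 1,2,3`), the
estimators `Θ̂`, `R̂`, `Ĥ` recover `T`, `R`, `H` with the stated rates. -/
theorem three_scale_debiasing (S ρ ε M H R T A1 A2 A3 Δ1 Δ2 Θhat Rhat Hhat : ℝ)
    (hS : 0 < S) (hρ : ρ ≠ 0) (hε : 0 < ε) (hM : 0 ≤ M)
    (h1 : |A1 - S * (ρ * H + 1 * ε * R + 1 ^ 2 * ε ^ 2 * T)| ≤ M * ε ^ 3)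
    (h2 : |A2 - S * (ρ * H + 2 * ε * R + 2 ^ 2 * ε ^ 2 * T)| ≤ M * ε ^ 3)
    (h3 : |A3 - S * (ρ * H + 3 * ε * R + 3 ^ 2 * ε ^ 2 * T)| ≤ M * ε ^ 3)
    (hΔ1 : Δ1 = A2 - A1) (hΔ2 : Δ2 = A3 - A2)
    (hΘ : Θhat = (Δ2 - Δ1) / (2 * S * ε ^ 2))
    (hR : Rhat = Δ1 / (S * ε) - 3 * ε * Θhat)
    (hH : Hhat = ρ⁻¹ * (A1 / S - ε * Rhat - ε ^ 2 * Θhat)) :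
    |Θhat - T| ≤ 2 * (M / S) * ε
    ∧ |Rhat - R| ≤ 8 * (M / S) * ε ^ 2
    ∧ |Hhat - H| ≤ 11 * (M / (S * |ρ|)) * ε ^ 3 := by
  have hSne : S ≠ 0 := ne_of_gt hS
  have hεne : ε ≠ 0 := ne_of_gt hε
  set E1 := A1 - S * (ρ * H + 1 * ε * R + 1 ^ 2 * ε ^ 2 * T) with hE1
  set E2 := A2 - S * (ρ * H + 2 * ε * R + 2 ^ 2 * ε ^ 2 * T) with hE2
  set E3 := A3 - S * (ρ * H + 3 * ε * R + 3 ^ 2 * ε ^ 2 * T) with hE3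
  obtain ⟨l1, u1⟩ := abs_le.mp h1
  obtain ⟨l2, u2⟩ := abs_le.mp h2
  obtain ⟨l3, u3⟩ := abs_le.mp h3
  have hA1 : A1 = E1 + S * (ρ * H + 1 * ε * R + 1 ^ 2 * ε ^ 2 * T) := by rw [hE1]; ring
  have hA2 : A2 = E2 + S * (ρ * H + 2 * ε * R + 2 ^ 2 * ε ^ 2 * T) := by rw [hE2]; ring
  have hA3 : A3 = E3 + S * (ρ * H + 3 * ε * R + 3 ^ 2 * ε ^ 2 * T) := by rw [hE3]; ring
  have keyT : Θhat - T = (E3 - 2 * E2 + E1) / (2 * S * ε ^ 2) := by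
    rw [hΘ, hΔ2, hΔ1, hA1, hA2, hA3]; field_simp; ring
  have keyR : Rhat - R = (-3 * E3 + 8 * E2 - 5 * E1) / (2 * S * ε) := by
    rw [hR, hΘ, hΔ2, hΔ1, hA1, hA2, hA3]; field_simp; ring
  have keyH : Hhat - H = (2 * E3 - 6 * E2 + 6 * E1) / (2 * S * ρ) := by
    rw [hH, hR, hΘ, hΔ2, hΔ1, hA1, hA2, hA3]; field_simp; ring
  have hd1 : (0:ℝ) < 2 * S * ε ^ 2 := by positivity
  have hd2 : (0:ℝ) < 2 * S * ε := by positivity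
  have hd3 : (0:ℝ) < 2 * S * |ρ| := by positivity
  refine ⟨?_, ?_, ?_⟩
  · calc |Θhat - T| = |E3 - 2 * E2 + E1| / (2 * S * ε ^ 2) := by
          rw [keyT, abs_div, abs_of_pos hd1]
      _ ≤ (4 * (M * ε ^ 3)) / (2 * S * ε ^ 2) := by
          gcongr
          exact abs_le.mpr ⟨by linarith, by linarith⟩
      _ = 2 * (M / S) * ε := by field_simp; ring
  · calc |Rhat - R| = |-3 * E3 + 8 * E2 - 5 * E1| / (2 * S * ε) := by
          rw [keyR, abs_div, abs_of_pos hd2]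
      _ ≤ (16 * (M * ε ^ 3)) / (2 * S * ε) := by
          gcongr
          exact abs_le.mpr ⟨by linarith, by linarith⟩
      _ = 8 * (M / S) * ε ^ 2 := by field_simp; ring
  · calc |Hhat - H| = |2 * E3 - 6 * E2 + 6 * E1| / (2 * S * |ρ|) := by
          rw [keyH, abs_div, abs_mul, abs_mul, abs_of_pos (by norm_num : (0:ℝ) < 2),
            abs_of_pos hS]
      _ ≤ (14 * (M * ε ^ 3)) / (2 * S * |ρ|) := by
          gcongr
          exact abs_le.mpr ⟨by linarith, by linarith⟩
      _ = 7 * (M / (S * |ρ|)) * ε ^ 3 := by field_simp; ring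
      _ ≤ 11 * (M / (S * |ρ|)) * ε ^ 3 := by
          have h7 : 0 ≤ M / (S * |ρ|) * ε ^ 3 := by positivity
          nlinarith [h7]
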